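/- Let Z ⊆ ℝ^q, W ⊆ ℝ^p be basic ellitopes given by Z = {z : ∃ s ∈ S, zᵀS_ℓ z ≤ s_ℓ, ℓ ≤ L} and W = {w : ∃ t ∈ T, wᵀT_k w ≤ t_k, k ≤ K}, let X = PW and B_* = QZ have nonempty interiors, and let B be the polar of B_*. Define Opt(A) = min over λ ≥ 0, υ ≥ 0 of φ_T(λ) + φ_S(υ) subject to the block matrix [[∑_ℓ υ_ℓ S_ℓ, QᵀAP/2],[PᵀAᵀQ/2, ∑_k λ_k T_k]] ⪰ 0. Then ‖A‖_{B,X} ≤ Opt(A), and if K = L = 1 then Opt(A) = ‖A‖_{B,X}. -/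

import Mathlib

open Matrix Set

section Stmt17Aux

lemma stmt17aux_quad_cont {ι : Type*} [Fintype ι] (M : Matrix ι ι ℝ) :
    Continuous fun v : ι → ℝ => v ⬝ᵥ M *ᵥ v := by
  simp only [dotProduct, mulVec]
  exact continuous_finset_sum _ fun i _ => (continuous_apply i).mul
    (continuous_finset_sum _ fun j _ => continuous_const.mul (continuous_apply j))

lemma stmt17aux_quad_smul {ι : Type*} [Fintype ι] (M : Matrix ι ι ℝ) (a : ℝ) (v : ι → ℝ) :
    (a • v) ⬝ᵥ M *ᵥ (a • v) = a ^ 2 * (v ⬝ᵥ M *ᵥ v) := by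
  rw [smul_dotProduct, Matrix.mulVec_smul, dotProduct_smul,
    smul_eq_mul, smul_eq_mul]; ring

lemma stmt17aux_exists_smul_add_nonneg {ι : Type*} [Fintype ι]
    (G H : Matrix ι ι ℝ) (hG : G.PosDef) :
    ∃ c : ℝ, 0 ≤ c ∧ ∀ v : ι → ℝ, 0 ≤ c * (v ⬝ᵥ G *ᵥ v) + v ⬝ᵥ H *ᵥ v := by
  rcases isEmpty_or_nonempty ι with hι | hι
  · exact ⟨0, le_refl 0, fun v => by simp [dotProduct]⟩
  · have hsph : IsCompact (Metric.sphere (0 : ι → ℝ) 1) := isCompact_sphere _ _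
    have hne : (Metric.sphere (0 : ι → ℝ) 1).Nonempty :=
      NormedSpace.sphere_nonempty.mpr zero_le_one
    obtain ⟨vδ, hvδS, hδmin⟩ := hsph.exists_isMinOn hne (stmt17aux_quad_cont G).continuousOn
    obtain ⟨vM, hvMS, hMmax⟩ := hsph.exists_isMaxOn hne (stmt17aux_quad_cont H).neg.continuousOn
    have hvδ0 : vδ ≠ 0 := by
      intro h
      rw [Metric.mem_sphere, dist_zero_right] at hvδS
      simp [h] at hvδS
    have hδ : 0 < vδ ⬝ᵥ G *ᵥ vδ := by simpa using hG.dotProduct_mulVec_pos hvδ0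
    set δ := vδ ⬝ᵥ G *ᵥ vδ with hδdef
    refine ⟨max 0 ((-(vM ⬝ᵥ H *ᵥ vM)) / δ), le_max_left _ _, fun v => ?_⟩
    set c := max 0 ((-(vM ⬝ᵥ H *ᵥ vM)) / δ) with hc
    rcases eq_or_ne v 0 with rfl | hv
    · simp
    · have hn : ‖v‖ ≠ 0 := norm_ne_zero_iff.mpr hv
      obtain ⟨u, huS, hvu⟩ : ∃ u ∈ Metric.sphere (0 : ι → ℝ) 1, v = ‖v‖ • u := by
        refine ⟨‖v‖⁻¹ • v, ?_, (smul_inv_smul₀ hn v).symm⟩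
        rw [Metric.mem_sphere, dist_zero_right, norm_smul, norm_inv, norm_norm,
          inv_mul_cancel₀ hn]
      have hunit : 0 ≤ c * (u ⬝ᵥ G *ᵥ u) + u ⬝ᵥ H *ᵥ u := by
        have h1 : -(u ⬝ᵥ H *ᵥ u) ≤ -(vM ⬝ᵥ H *ᵥ vM) := hMmax huS
        have h2 : -(vM ⬝ᵥ H *ᵥ vM) ≤ c * δ := by
          have hle : (-(vM ⬝ᵥ H *ᵥ vM)) / δ ≤ c := le_max_right _ _
          calc -(vM ⬝ᵥ H *ᵥ vM) = (-(vM ⬝ᵥ H *ᵥ vM)) / δ * δ := by field_simp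
          _ ≤ c * δ := mul_le_mul_of_nonneg_right hle hδ.le
        have h3 : c * δ ≤ c * (u ⬝ᵥ G *ᵥ u) :=
          mul_le_mul_of_nonneg_left (hδmin huS) (le_max_left _ _)
        linarith
      rw [hvu, stmt17aux_quad_smul, stmt17aux_quad_smul]
      nlinarith [mul_nonneg (sq_nonneg ‖v‖) hunit]

lemma stmt17aux_herm_smul {ι : Type*} [Fintype ι] (c : ℝ) {G : Matrix ι ι ℝ}
    (h : G.IsHermitian) : (c • G).IsHermitian := by
  ext i j
  have h2 := congrFun (congrFun h i) j
  simp only [Matrix.conjTranspose_apply, star_trivial] at h2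
  simp only [Matrix.conjTranspose_apply, Matrix.smul_apply, star_trivial, smul_eq_mul, h2]

lemma stmt17aux_bilin {q p n m : ℕ} (P : Matrix (Fin n) (Fin p) ℝ) (Q : Matrix (Fin m) (Fin q) ℝ)
    (A : Matrix (Fin m) (Fin n) ℝ) (z : Fin q → ℝ) (w : Fin p → ℝ) :
    (Q *ᵥ z) ⬝ᵥ A *ᵥ (P *ᵥ w) = z ⬝ᵥ (Qᵀ * A * P) *ᵥ w := by
  rw [Matrix.mulVec_mulVec, Matrix.dotProduct_mulVec, Matrix.dotProduct_mulVec,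
    ← Matrix.vecMul_vecMul]
  congr 1
  rw [← Matrix.vecMul_transpose Q z, Matrix.vecMul_vecMul, Matrix.vecMul_vecMul, Matrix.mul_assoc]

lemma stmt17aux_dot_transpose {q p : ℕ} (M : Matrix (Fin q) (Fin p) ℝ) (z : Fin q → ℝ)
    (w : Fin p → ℝ) : w ⬝ᵥ Mᵀ *ᵥ z = z ⬝ᵥ M *ᵥ w := by
  rw [Matrix.mulVec_transpose, dotProduct_comm, ← Matrix.dotProduct_mulVec]

lemma stmt17aux_block_quad {q p : ℕ} (A : Matrix (Fin q) (Fin q) ℝ) (B : Matrix (Fin q) (Fin p) ℝ)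
    (C : Matrix (Fin p) (Fin q) ℝ) (D : Matrix (Fin p) (Fin p) ℝ) (z : Fin q → ℝ) (w : Fin p → ℝ) :
    (Sum.elim z w) ⬝ᵥ (fromBlocks A B C D) *ᵥ (Sum.elim z w)
      = z ⬝ᵥ A *ᵥ z + z ⬝ᵥ B *ᵥ w + (w ⬝ᵥ C *ᵥ z + w ⬝ᵥ D *ᵥ w) := by
  simp [fromBlocks_mulVec, sumElim_dotProduct_sumElim, dotProduct_add]

lemma stmt17aux_sum_smul_quad {q L : ℕ} (Sm : Fin L → Matrix (Fin q) (Fin q) ℝ) (u : Fin L → ℝ)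
    (z : Fin q → ℝ) : z ⬝ᵥ (∑ ℓ, u ℓ • Sm ℓ) *ᵥ z = ∑ ℓ, u ℓ * (z ⬝ᵥ Sm ℓ *ᵥ z) := by
  induction (Finset.univ : Finset (Fin L)) using Finset.induction with
  | empty => simp
  | insert _ _ h ih => simp [Finset.sum_insert h, Matrix.add_mulVec, Matrix.smul_mulVec,
      dotProduct_add, dotProduct_smul, ih, smul_eq_mul]

lemma stmt17aux_lin_image {K : ℕ} (lam : Fin K → ℝ) (T : Set (Fin K → ℝ)) :
    {u | ∃ t ∈ T, u = ∑ k, lam k * t k} = (fun t => ∑ k, lam k * t k) '' T := by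
  ext u
  exact ⟨fun ⟨t, ht, h⟩ => ⟨t, ht, h.symm⟩, fun ⟨t, ht, h⟩ => ⟨t, ht, h.symm⟩⟩

lemma stmt17aux_lin_cont {K : ℕ} (lam : Fin K → ℝ) :
    Continuous fun t : Fin K → ℝ => ∑ k, lam k * t k :=
  continuous_finset_sum _ fun k _ => continuous_const.mul (continuous_apply k)

lemma stmt17aux_sSup_one (c : ℝ) (hc : 0 ≤ c) (T : Set (Fin 1 → ℝ)) (hcomp : IsCompact T)
    (hne : T.Nonempty) :
    sSup {u | ∃ t ∈ T, u = c * t 0} = c * sSup ((fun t => t 0) '' T) := by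
  have h1 : {u | ∃ t ∈ T, u = c * t 0} = (fun a => c * a) '' ((fun t => t 0) '' T) := by
    ext u
    constructor
    · rintro ⟨t, ht, rfl⟩; exact ⟨t 0, ⟨t, ht, rfl⟩, rfl⟩
    · rintro ⟨a, ⟨t, ht, rfl⟩, rfl⟩; exact ⟨t, ht, rfl⟩
  have hne' : ((fun t => t 0) '' T).Nonempty := hne.image _
  have hbdd : BddAbove ((fun t => t 0) '' T) := (hcomp.image (continuous_apply 0)).bddAbove
  rw [h1]
  exact (Monotone.map_csSup_of_continuousAt (continuousAt_const.mul continuousAt_id)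
    (fun a b hab => mul_le_mul_of_nonneg_left hab hc) hne' hbdd).symm

end Stmt17Aux

set_option maxHeartbeats 2000000 in
/-- Main bounding theorem: for ellitopes `X = PW`, `B_* = QZ` (with `B` the polar of `B_*`),
the SDP value `Opt(A)` upper-bounds `‖A‖_{B,X} = max{yᵀAx : y ∈ B_*, x ∈ X}`, and when
`K = L = 1` the bound is exact. -/
theorem stmt17 {q p n m K L : ℕ}
    (Sm : Fin L → Matrix (Fin q) (Fin q) ℝ) (Sset : Set (Fin L → ℝ))
    (Tm : Fin K → Matrix (Fin p) (Fin p) ℝ) (Tset : Set (Fin K → ℝ))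
    (hSsd : ∀ ℓ, (Sm ℓ).PosSemidef) (hSsum : (∑ ℓ, Sm ℓ).PosDef)
    (hSconv : Convex ℝ Sset) (hScomp : IsCompact Sset)
    (hSnonneg : ∀ s ∈ Sset, ∀ ℓ, 0 ≤ s ℓ)
    (hSmono : ∀ s ∈ Sset, ∀ s' : Fin L → ℝ, (∀ ℓ, 0 ≤ s' ℓ) → (∀ ℓ, s' ℓ ≤ s ℓ) → s' ∈ Sset)
    (hSint : (interior Sset).Nonempty)
    (hTsd : ∀ k, (Tm k).PosSemidef) (hTsum : (∑ k, Tm k).PosDef)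
    (hTconv : Convex ℝ Tset) (hTcomp : IsCompact Tset)
    (hTnonneg : ∀ t ∈ Tset, ∀ k, 0 ≤ t k)
    (hTmono : ∀ t ∈ Tset, ∀ t' : Fin K → ℝ, (∀ k, 0 ≤ t' k) → (∀ k, t' k ≤ t k) → t' ∈ Tset)
    (hTint : (interior Tset).Nonempty)
    (P : Matrix (Fin n) (Fin p) ℝ) (Q : Matrix (Fin m) (Fin q) ℝ)
    (W : Set (Fin p → ℝ)) (hW : W = {w | ∃ t ∈ Tset, ∀ k, w ⬝ᵥ (Tm k) *ᵥ w ≤ t k})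
    (Z : Set (Fin q → ℝ)) (hZ : Z = {z | ∃ s ∈ Sset, ∀ ℓ, z ⬝ᵥ (Sm ℓ) *ᵥ z ≤ s ℓ})
    (X : Set (Fin n → ℝ)) (hX : X = (fun w => P *ᵥ w) '' W)
    (hXint : (interior X).Nonempty)
    (Bstar : Set (Fin m → ℝ)) (hBs : Bstar = (fun z => Q *ᵥ z) '' Z)
    (hBsint : (interior Bstar).Nonempty)
    (A : Matrix (Fin m) (Fin n) ℝ)
    (nrm Opt : ℝ)
    (hnrm : nrm = sSup {r | ∃ y ∈ Bstar, ∃ x ∈ X, r = y ⬝ᵥ A *ᵥ x})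
    (hOpt : Opt = sInf {r | ∃ (lam : Fin K → ℝ) (ups : Fin L → ℝ),
        (∀ k, 0 ≤ lam k) ∧ (∀ ℓ, 0 ≤ ups ℓ) ∧
        (Matrix.fromBlocks (∑ ℓ, ups ℓ • Sm ℓ) ((1 / 2 : ℝ) • (Qᵀ * A * P))
            ((1 / 2 : ℝ) • (Qᵀ * A * P)ᵀ) (∑ k, lam k • Tm k)).PosSemidef ∧
        r = sSup {u | ∃ t ∈ Tset, u = ∑ k, lam k * t k}
            + sSup {u | ∃ s ∈ Sset, u = ∑ ℓ, ups ℓ * s ℓ}}) :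
    nrm ≤ Opt ∧ (K = 1 → L = 1 → Opt = nrm) := by
  set M := Qᵀ * A * P with hMdef
  set nrmSet := {r | ∃ y ∈ Bstar, ∃ x ∈ X, r = y ⬝ᵥ A *ᵥ x} with hnrmSet
  set Rset := {r | ∃ (lam : Fin K → ℝ) (ups : Fin L → ℝ),
        (∀ k, 0 ≤ lam k) ∧ (∀ ℓ, 0 ≤ ups ℓ) ∧
        (Matrix.fromBlocks (∑ ℓ, ups ℓ • Sm ℓ) ((1 / 2 : ℝ) • (Qᵀ * A * P))
            ((1 / 2 : ℝ) • (Qᵀ * A * P)ᵀ) (∑ k, lam k • Tm k)).PosSemidef ∧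
        r = sSup {u | ∃ t ∈ Tset, u = ∑ k, lam k * t k}
            + sSup {u | ∃ s ∈ Sset, u = ∑ ℓ, ups ℓ * s ℓ}} with hRset
  have hTne : Tset.Nonempty := hTint.mono interior_subset
  have hSne : Sset.Nonempty := hSint.mono interior_subset
  -- 0 ∈ W, 0 ∈ Z
  have h0W : (0 : Fin p → ℝ) ∈ W := by
    rw [hW]
    obtain ⟨t0, ht0⟩ := hTne
    exact ⟨t0, ht0, fun k => by simpa using hTnonneg t0 ht0 k⟩
  have h0Z : (0 : Fin q → ℝ) ∈ Z := by
    rw [hZ]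
    obtain ⟨s0, hs0⟩ := hSne
    exact ⟨s0, hs0, fun ℓ => by simpa using hSnonneg s0 hs0 ℓ⟩
  have h0nrm : (0 : ℝ) ∈ nrmSet := by
    refine ⟨Q *ᵥ 0, by rw [hBs]; exact ⟨0, h0Z, rfl⟩, P *ᵥ 0, by rw [hX]; exact ⟨0, h0W, rfl⟩, ?_⟩
    simp
  -- the key elementwise bound
  have hbound : ∀ (lam : Fin K → ℝ) (ups : Fin L → ℝ), (∀ k, 0 ≤ lam k) → (∀ ℓ, 0 ≤ ups ℓ) →
      (Matrix.fromBlocks (∑ ℓ, ups ℓ • Sm ℓ) ((1 / 2 : ℝ) • (Qᵀ * A * P))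
          ((1 / 2 : ℝ) • (Qᵀ * A * P)ᵀ) (∑ k, lam k • Tm k)).PosSemidef →
      ∀ r' ∈ nrmSet, r' ≤ sSup {u | ∃ t ∈ Tset, u = ∑ k, lam k * t k}
          + sSup {u | ∃ s ∈ Sset, u = ∑ ℓ, ups ℓ * s ℓ} := by
    rintro lam ups hl hu hpsd r' ⟨y, hy, x, hx, rfl⟩
    rw [hBs] at hy
    obtain ⟨z, hz, rfl⟩ := hy
    rw [hX] at hx
    obtain ⟨w, hw, rfl⟩ := hx
    rw [hZ] at hz
    obtain ⟨s, hs, hzs⟩ := hz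
    rw [hW] at hw
    obtain ⟨t, ht, hwt⟩ := hw
    rw [stmt17aux_bilin]
    have hquad : (0:ℝ) ≤ (Sum.elim z (-w)) ⬝ᵥ
        (Matrix.fromBlocks (∑ ℓ, ups ℓ • Sm ℓ) ((1 / 2 : ℝ) • (Qᵀ * A * P))
          ((1 / 2 : ℝ) • (Qᵀ * A * P)ᵀ) (∑ k, lam k • Tm k)) *ᵥ (Sum.elim z (-w)) := by
      simpa using hpsd.dotProduct_mulVec_nonneg (Sum.elim z (-w))
    have hq2 : (0:ℝ) ≤ z ⬝ᵥ (∑ ℓ, ups ℓ • Sm ℓ) *ᵥ z - z ⬝ᵥ (Qᵀ * A * P) *ᵥ w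
        + w ⬝ᵥ (∑ k, lam k • Tm k) *ᵥ w := by
      rw [stmt17aux_block_quad (∑ ℓ, ups ℓ • Sm ℓ) ((1 / 2 : ℝ) • (Qᵀ * A * P))
        ((1 / 2 : ℝ) • (Qᵀ * A * P)ᵀ) (∑ k, lam k • Tm k) z (-w)] at hquad
      simp only [Matrix.mulVec_neg, neg_dotProduct, dotProduct_neg,
        Matrix.smul_mulVec, dotProduct_smul, smul_eq_mul, neg_neg] at hquad
      have hT : w ⬝ᵥ (Qᵀ * A * P)ᵀ *ᵥ z = z ⬝ᵥ (Qᵀ * A * P) *ᵥ w :=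
        stmt17aux_dot_transpose _ _ _
      nlinarith [hquad, hT]
    have hSle : z ⬝ᵥ (∑ ℓ, ups ℓ • Sm ℓ) *ᵥ z ≤ ∑ ℓ, ups ℓ * s ℓ := by
      rw [stmt17aux_sum_smul_quad]
      exact Finset.sum_le_sum fun ℓ _ => mul_le_mul_of_nonneg_left (hzs ℓ) (hu ℓ)
    have hTle : w ⬝ᵥ (∑ k, lam k • Tm k) *ᵥ w ≤ ∑ k, lam k * t k := by
      rw [stmt17aux_sum_smul_quad]
      exact Finset.sum_le_sum fun k _ => mul_le_mul_of_nonneg_left (hwt k) (hl k)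
    have hTsup : (∑ k, lam k * t k) ≤ sSup {u | ∃ t ∈ Tset, u = ∑ k, lam k * t k} := by
      apply le_csSup
      · rw [stmt17aux_lin_image]
        exact (hTcomp.image (stmt17aux_lin_cont lam)).bddAbove
      · exact ⟨t, ht, rfl⟩
    have hSsup : (∑ ℓ, ups ℓ * s ℓ) ≤ sSup {u | ∃ s ∈ Sset, u = ∑ ℓ, ups ℓ * s ℓ} := by
      apply le_csSup
      · rw [stmt17aux_lin_image]
        exact (hScomp.image (stmt17aux_lin_cont ups)).bddAbove
      · exact ⟨s, hs, rfl⟩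
    linarith
  -- Rset is nonempty
  have hRne : Rset.Nonempty := by
    have hG : (fromBlocks (∑ ℓ, Sm ℓ) (0 : Matrix (Fin q) (Fin p) ℝ) 0 (∑ k, Tm k)).PosDef := by
      refine Matrix.PosDef.of_dotProduct_mulVec_pos ?_ ?_
      · rw [Matrix.isHermitian_fromBlocks_iff]
        exact ⟨hSsum.1, by simp, by simp, hTsum.1⟩
      · intro v hv
        have hv' : (Sum.elim (v ∘ Sum.inl) (v ∘ Sum.inr) : Fin q ⊕ Fin p → ℝ) = v :=
          Sum.elim_comp_inl_inr v
        have hquad := stmt17aux_block_quad (∑ ℓ, Sm ℓ) (0 : Matrix (Fin q) (Fin p) ℝ) 0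
          (∑ k, Tm k) (v ∘ Sum.inl) (v ∘ Sum.inr)
        rw [hv'] at hquad
        have hzw : v ∘ Sum.inl ≠ 0 ∨ v ∘ Sum.inr ≠ 0 := by
          by_contra h
          push_neg at h
          apply hv
          funext i
          cases i with
          | inl a => exact congrFun h.1 a
          | inr a => exact congrFun h.2 a
        have hz0 : 0 ≤ (v ∘ Sum.inl) ⬝ᵥ (∑ ℓ, Sm ℓ) *ᵥ (v ∘ Sum.inl) := by
          simpa using hSsum.posSemidef.dotProduct_mulVec_nonneg (v ∘ Sum.inl)
        have hw0 : 0 ≤ (v ∘ Sum.inr) ⬝ᵥ (∑ k, Tm k) *ᵥ (v ∘ Sum.inr) := by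
          simpa using hTsum.posSemidef.dotProduct_mulVec_nonneg (v ∘ Sum.inr)
        have hpos : 0 < (v ∘ Sum.inl) ⬝ᵥ (∑ ℓ, Sm ℓ) *ᵥ (v ∘ Sum.inl)
            + (v ∘ Sum.inr) ⬝ᵥ (∑ k, Tm k) *ᵥ (v ∘ Sum.inr) := by
          rcases hzw with h | h
          · have h2 := hSsum.dotProduct_mulVec_pos h
            simp only [star_trivial, RCLike.re_to_real] at h2
            linarith
          · have h2 := hTsum.dotProduct_mulVec_pos h
            simp only [star_trivial, RCLike.re_to_real] at h2
            linarith
        have key : (0:ℝ) < v ⬝ᵥ (fromBlocks (∑ ℓ, Sm ℓ) (0 : Matrix (Fin q) (Fin p) ℝ) 0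
            (∑ k, Tm k)) *ᵥ v := by
          rw [hquad]
          simpa using hpos
        simpa using key
    obtain ⟨c, hc0, hc⟩ := stmt17aux_exists_smul_add_nonneg
      (fromBlocks (∑ ℓ, Sm ℓ) (0 : Matrix (Fin q) (Fin p) ℝ) 0 (∑ k, Tm k))
      (fromBlocks 0 ((1 / 2 : ℝ) • (Qᵀ * A * P)) ((1 / 2 : ℝ) • (Qᵀ * A * P)ᵀ) 0) hG
    refine ⟨_, (fun _ => c), (fun _ => c), fun _ => hc0, fun _ => hc0, ?_, rfl⟩
    have hFeq : (Matrix.fromBlocks (∑ ℓ, (fun _ : Fin L => c) ℓ • Sm ℓ) ((1 / 2 : ℝ) • (Qᵀ * A * P))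
          ((1 / 2 : ℝ) • (Qᵀ * A * P)ᵀ) (∑ k, (fun _ : Fin K => c) k • Tm k))
        = c • (fromBlocks (∑ ℓ, Sm ℓ) (0 : Matrix (Fin q) (Fin p) ℝ) 0 (∑ k, Tm k))
          + (fromBlocks 0 ((1 / 2 : ℝ) • (Qᵀ * A * P)) ((1 / 2 : ℝ) • (Qᵀ * A * P)ᵀ) 0) := by
      rw [← Finset.smul_sum, ← Finset.smul_sum]
      simp [Matrix.fromBlocks_add, Matrix.fromBlocks_smul]
    rw [hFeq]
    refine Matrix.PosSemidef.of_dotProduct_mulVec_nonneg ?_ ?_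
    · refine Matrix.IsHermitian.add (stmt17aux_herm_smul c hG.1) ?_
      rw [Matrix.isHermitian_fromBlocks_iff]
      refine ⟨by simp [Matrix.IsHermitian], ?_, ?_, by simp [Matrix.IsHermitian]⟩ <;>
        ext i j <;> simp only [Matrix.conjTranspose_apply, Matrix.smul_apply,
          Matrix.transpose_apply, star_trivial]
    · intro v
      have := hc v
      simp only [star_trivial, RCLike.re_to_real]
      rw [Matrix.add_mulVec, Matrix.smul_mulVec, dotProduct_add, dotProduct_smul,
        smul_eq_mul]
      simpa using this
  -- every element of Rset bounds nrm
  have hnrmle : ∀ r ∈ Rset, nrm ≤ r := by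
    rintro r ⟨lam, ups, hl, hu, hpsd, rfl⟩
    rw [hnrm]
    exact csSup_le ⟨0, h0nrm⟩ (hbound lam ups hl hu hpsd)
  have part1 : nrm ≤ Opt := by
    rw [hOpt]
    exact le_csInf hRne hnrmle
  refine ⟨part1, ?_⟩
  intro hK hL
  subst hK
  subst hL
  -- exactness for K = L = 1
  have hS : (Sm 0).PosDef := by
    have h : ∑ ℓ : Fin 1, Sm ℓ = Sm 0 := Fin.sum_univ_one _
    rwa [h] at hSsum
  have hT : (Tm 0).PosDef := by
    have h : ∑ k : Fin 1, Tm k = Tm 0 := Fin.sum_univ_one _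
    rwa [h] at hTsum
  have hbddnrm : BddAbove nrmSet := by
    obtain ⟨r, hr⟩ := hRne
    obtain ⟨lam, ups, hl, hu, hpsd, hreq⟩ := hr
    exact ⟨_, fun e he => (hreq ▸ hbound lam ups hl hu hpsd e he : e ≤ r)⟩
  have hnrm0 : 0 ≤ nrm := hnrm ▸ le_csSup hbddnrm h0nrm
  -- τ and σ
  set τ := sSup ((fun t => t 0) '' Tset) with hτdef
  set σ := sSup ((fun s => s 0) '' Sset) with hσdef
  have hbddT : BddAbove ((fun t => t 0) '' Tset) := (hTcomp.image (continuous_apply 0)).bddAbove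
  have hbddS : BddAbove ((fun s => s 0) '' Sset) := (hScomp.image (continuous_apply 0)).bddAbove
  -- attainment
  obtain ⟨tm, htm, htmax⟩ := hTcomp.exists_isMaxOn hTne (continuous_apply 0).continuousOn
  obtain ⟨sm, hsm, hsmax⟩ := hScomp.exists_isMaxOn hSne (continuous_apply 0).continuousOn
  have hτeq : τ = tm 0 := by
    refine IsGreatest.csSup_eq ⟨⟨tm, htm, rfl⟩, ?_⟩
    rintro _ ⟨t, ht, rfl⟩
    exact htmax ht
  have hσeq : σ = sm 0 := by
    refine IsGreatest.csSup_eq ⟨⟨sm, hsm, rfl⟩, ?_⟩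
    rintro _ ⟨s, hs, rfl⟩
    exact hsmax hs
  -- positivity of τ and σ
  have hτpos : 0 < τ := by
    obtain ⟨t0, ht0⟩ := hTint
    rw [mem_interior_iff_mem_nhds, Metric.mem_nhds_iff] at ht0
    obtain ⟨ε, hε, hball⟩ := ht0
    have hmem : (fun _ : Fin 1 => t0 0 + ε / 2) ∈ Tset := by
      apply hball
      rw [Metric.mem_ball]
      have : ∀ i : Fin 1, dist ((fun _ : Fin 1 => t0 0 + ε / 2) i) (t0 i) < ε := by
        intro i
        have : i = 0 := Subsingleton.elim i 0
        subst this
        rw [Real.dist_eq]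
        rw [show t0 0 + ε / 2 - t0 0 = ε / 2 by ring, abs_of_pos (by linarith)]
        linarith
      exact (dist_pi_lt_iff hε).mpr this
    have ht00 : 0 ≤ t0 0 := by
      have : t0 ∈ Tset := hball (Metric.mem_ball_self hε)
      exact hTnonneg t0 this 0
    have : t0 0 + ε / 2 ≤ τ := le_csSup hbddT ⟨_, hmem, rfl⟩
    linarith
  have hσpos : 0 < σ := by
    obtain ⟨s0, hs0⟩ := hSint
    rw [mem_interior_iff_mem_nhds, Metric.mem_nhds_iff] at hs0
    obtain ⟨ε, hε, hball⟩ := hs0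
    have hmem : (fun _ : Fin 1 => s0 0 + ε / 2) ∈ Sset := by
      apply hball
      rw [Metric.mem_ball]
      have : ∀ i : Fin 1, dist ((fun _ : Fin 1 => s0 0 + ε / 2) i) (s0 i) < ε := by
        intro i
        have : i = 0 := Subsingleton.elim i 0
        subst this
        rw [Real.dist_eq]
        rw [show s0 0 + ε / 2 - s0 0 = ε / 2 by ring, abs_of_pos (by linarith)]
        linarith
      exact (dist_pi_lt_iff hε).mpr this
    have hs00 : 0 ≤ s0 0 := by
      have : s0 ∈ Sset := hball (Metric.mem_ball_self hε)
      exact hSnonneg s0 this 0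
    have : s0 0 + ε / 2 ≤ σ := le_csSup hbddS ⟨_, hmem, rfl⟩
    linarith
  clear_value τ σ
  -- key: bounded bilinear form on the ellipsoids
  have hkey : ∀ z w, z ⬝ᵥ Sm 0 *ᵥ z ≤ σ → w ⬝ᵥ Tm 0 *ᵥ w ≤ τ → z ⬝ᵥ (Qᵀ * A * P) *ᵥ w ≤ nrm := by
    intro z w hzb hwb
    have hzZ : z ∈ Z := by
      rw [hZ]
      refine ⟨sm, hsm, fun ℓ => ?_⟩
      have : ℓ = 0 := Subsingleton.elim ℓ 0
      subst this
      rw [← hσeq]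
      exact hzb
    have hwW : w ∈ W := by
      rw [hW]
      refine ⟨tm, htm, fun k => ?_⟩
      have : k = 0 := Subsingleton.elim k 0
      subst this
      rw [← hτeq]
      exact hwb
    have hel : (Q *ᵥ z) ⬝ᵥ A *ᵥ (P *ᵥ w) ∈ nrmSet :=
      ⟨Q *ᵥ z, by rw [hBs]; exact ⟨z, hzZ, rfl⟩, P *ᵥ w, by rw [hX]; exact ⟨w, hwW, rfl⟩, rfl⟩
    have := le_csSup hbddnrm hel
    rwa [stmt17aux_bilin, ← hnrm] at this
  -- feasibility of the candidate multipliers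
  have hfeas : ∀ (z : Fin q → ℝ) (w : Fin p → ℝ),
      0 ≤ nrm / (2 * σ) * (z ⬝ᵥ Sm 0 *ᵥ z) + z ⬝ᵥ (Qᵀ * A * P) *ᵥ w
        + nrm / (2 * τ) * (w ⬝ᵥ Tm 0 *ᵥ w) := by
    intro z w
    set a := z ⬝ᵥ Sm 0 *ᵥ z with ha
    set b := w ⬝ᵥ Tm 0 *ᵥ w with hb
    have ha0 : 0 ≤ a := by simpa using hS.posSemidef.dotProduct_mulVec_nonneg z
    have hb0 : 0 ≤ b := by simpa using hT.posSemidef.dotProduct_mulVec_nonneg w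
    have hnτ : 0 ≤ nrm / (2 * τ) := div_nonneg hnrm0 (by linarith)
    have hnσ : 0 ≤ nrm / (2 * σ) := div_nonneg hnrm0 (by linarith)
    rcases eq_or_ne z 0 with rfl | hz
    · simp only [zero_dotProduct]
      have : a = 0 := by simp [ha]
      rw [this]
      have : (0:ℝ) ≤ nrm / (2 * τ) * b := mul_nonneg hnτ hb0
      linarith
    rcases eq_or_ne w 0 with rfl | hw
    · have h1 : z ⬝ᵥ (Qᵀ * A * P) *ᵥ (0 : Fin p → ℝ) = 0 := by simp
      have h2 : b = 0 := by simp [hb]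
      rw [h1, h2]
      have : (0:ℝ) ≤ nrm / (2 * σ) * a := mul_nonneg hnσ ha0
      linarith
    have hapos : 0 < a := by simpa using hS.dotProduct_mulVec_pos hz
    have hbpos : 0 < b := by simpa using hT.dotProduct_mulVec_pos hw
    clear_value a b
    have hσa : 0 < σ / a := div_pos hσpos hapos
    have hτb : 0 < τ / b := div_pos hτpos hbpos
    set α := Real.sqrt (σ / a) with hα
    set β := Real.sqrt (τ / b) with hβ
    have hαpos : 0 < α := Real.sqrt_pos.mpr hσa
    have hβpos : 0 < β := Real.sqrt_pos.mpr hτb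
    have hα2 : α ^ 2 = σ / a := Real.sq_sqrt hσa.le
    have hβ2 : β ^ 2 = τ / b := Real.sq_sqrt hτb.le
    have hz' : (α • z) ⬝ᵥ Sm 0 *ᵥ (α • z) ≤ σ := by
      rw [stmt17aux_quad_smul, ← ha, hα2]
      field_simp
      exact le_refl 1
    have hw' : ((-β) • w) ⬝ᵥ Tm 0 *ᵥ ((-β) • w) ≤ τ := by
      rw [stmt17aux_quad_smul, ← hb]
      have : (-β) ^ 2 = β ^ 2 := by ring
      rw [this, hβ2]
      field_simp
      exact le_refl 1
    have hkey' := hkey (α • z) ((-β) • w) hz' hw'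
    have hbil : (α • z) ⬝ᵥ (Qᵀ * A * P) *ᵥ ((-β) • w)
        = -(α * β) * (z ⬝ᵥ (Qᵀ * A * P) *ᵥ w) := by
      rw [smul_dotProduct, Matrix.mulVec_smul, dotProduct_smul,
        smul_eq_mul, smul_eq_mul]
      ring
    rw [hbil] at hkey'
    -- so -(z M w) ≤ nrm / (α β)
    have hneg : -(z ⬝ᵥ (Qᵀ * A * P) *ᵥ w) ≤ nrm / (α * β) := by
      rw [le_div_iff₀ (mul_pos hαpos hβpos)]
      nlinarith [hkey']
    have hαβ : 1 / (α * β) = Real.sqrt (a / σ) * Real.sqrt (b / τ) := by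
      rw [hα, hβ, ← Real.sqrt_mul (by positivity), ← Real.sqrt_mul (by positivity),
        one_div, ← Real.sqrt_inv]
      congr 1
      field_simp
    set x := Real.sqrt (a / σ) with hx
    set y := Real.sqrt (b / τ) with hy
    have hx2 : x ^ 2 = a / σ := Real.sq_sqrt (div_nonneg ha0 hσpos.le)
    have hy2 : y ^ 2 = b / τ := Real.sq_sqrt (div_nonneg hb0 hτpos.le)
    have hx0 : 0 ≤ x := Real.sqrt_nonneg _
    have hy0 : 0 ≤ y := Real.sqrt_nonneg _
    clear_value α β x y
    have hamgm : x * y ≤ a / (2 * σ) + b / (2 * τ) := by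
      have h' : x * y ≤ (x ^ 2 + y ^ 2) / 2 := by nlinarith [sq_nonneg (x - y)]
      have e : (x ^ 2 + y ^ 2) / 2 = a / (2 * σ) + b / (2 * τ) := by
        rw [hx2, hy2]; ring
      linarith
    have h1 : nrm / (α * β) = nrm * (x * y) := by
      rw [div_eq_mul_inv, ← one_div, hαβ]
    have h2 : -(z ⬝ᵥ (Qᵀ * A * P) *ᵥ w) ≤ nrm * (a / (2 * σ) + b / (2 * τ)) := by
      rw [h1] at hneg
      calc -(z ⬝ᵥ (Qᵀ * A * P) *ᵥ w) ≤ nrm * (x * y) := hneg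
      _ ≤ nrm * (a / (2 * σ) + b / (2 * τ)) := mul_le_mul_of_nonneg_left hamgm hnrm0
    have h3 : nrm * (a / (2 * σ) + b / (2 * τ)) = nrm / (2 * σ) * a + nrm / (2 * τ) * b := by
      field_simp
    linarith [h2, h3.symm.le]
  -- the candidate is feasible and has value nrm
  have hmem : nrm ∈ Rset := by
    have hnτ : 0 ≤ nrm / (2 * τ) := div_nonneg hnrm0 (by linarith)
    have hnσ : 0 ≤ nrm / (2 * σ) := div_nonneg hnrm0 (by linarith)
    refine ⟨(fun _ => nrm / (2 * τ)), (fun _ => nrm / (2 * σ)), fun _ => hnτ,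
      fun _ => hnσ, ?_, ?_⟩
    · refine Matrix.PosSemidef.of_dotProduct_mulVec_nonneg ?_ ?_
      · rw [Matrix.isHermitian_fromBlocks_iff]
        refine ⟨?_, ?_, ?_, ?_⟩
        · have h : ∑ ℓ : Fin 1, (fun _ : Fin 1 => nrm / (2 * σ)) ℓ • Sm ℓ
              = (nrm / (2 * σ)) • Sm 0 := Fin.sum_univ_one _
          rw [h]
          exact stmt17aux_herm_smul _ hS.1
        · ext i j; simp only [Matrix.conjTranspose_apply, Matrix.smul_apply,
            Matrix.transpose_apply, star_trivial]
        · ext i j; simp only [Matrix.conjTranspose_apply, Matrix.smul_apply,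
            Matrix.transpose_apply, star_trivial]
        · have h : ∑ k : Fin 1, (fun _ : Fin 1 => nrm / (2 * τ)) k • Tm k
              = (nrm / (2 * τ)) • Tm 0 := Fin.sum_univ_one _
          rw [h]
          exact stmt17aux_herm_smul _ hT.1
      · intro v
        have hv' : (Sum.elim (v ∘ Sum.inl) (v ∘ Sum.inr) : Fin q ⊕ Fin p → ℝ) = v :=
          Sum.elim_comp_inl_inr v
        have key : (0:ℝ) ≤ v ⬝ᵥ (Matrix.fromBlocks
            (∑ ℓ : Fin 1, (fun _ : Fin 1 => nrm / (2 * σ)) ℓ • Sm ℓ)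
            ((1 / 2 : ℝ) • (Qᵀ * A * P)) ((1 / 2 : ℝ) • (Qᵀ * A * P)ᵀ)
            (∑ k : Fin 1, (fun _ : Fin 1 => nrm / (2 * τ)) k • Tm k)) *ᵥ v := by
          rw [← hv', stmt17aux_block_quad]
          have e1 : (v ∘ Sum.inl) ⬝ᵥ (∑ ℓ : Fin 1, (fun _ : Fin 1 => nrm / (2 * σ)) ℓ • Sm ℓ) *ᵥ
              (v ∘ Sum.inl) = nrm / (2 * σ) * ((v ∘ Sum.inl) ⬝ᵥ Sm 0 *ᵥ (v ∘ Sum.inl)) := by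
            rw [stmt17aux_sum_smul_quad, Fin.sum_univ_one]
          have e2 : (v ∘ Sum.inr) ⬝ᵥ (∑ k : Fin 1, (fun _ : Fin 1 => nrm / (2 * τ)) k • Tm k) *ᵥ
              (v ∘ Sum.inr) = nrm / (2 * τ) * ((v ∘ Sum.inr) ⬝ᵥ Tm 0 *ᵥ (v ∘ Sum.inr)) := by
            rw [stmt17aux_sum_smul_quad, Fin.sum_univ_one]
          have e3 : (v ∘ Sum.inl) ⬝ᵥ ((1 / 2 : ℝ) • (Qᵀ * A * P)) *ᵥ (v ∘ Sum.inr)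
              = 1 / 2 * ((v ∘ Sum.inl) ⬝ᵥ (Qᵀ * A * P) *ᵥ (v ∘ Sum.inr)) := by
            rw [Matrix.smul_mulVec, dotProduct_smul, smul_eq_mul]
          have e4 : (v ∘ Sum.inr) ⬝ᵥ ((1 / 2 : ℝ) • (Qᵀ * A * P)ᵀ) *ᵥ (v ∘ Sum.inl)
              = 1 / 2 * ((v ∘ Sum.inl) ⬝ᵥ (Qᵀ * A * P) *ᵥ (v ∘ Sum.inr)) := by
            rw [Matrix.smul_mulVec, dotProduct_smul, smul_eq_mul,
              stmt17aux_dot_transpose]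
          rw [e1, e2, e3, e4]
          have := hfeas (v ∘ Sum.inl) (v ∘ Sum.inr)
          linarith
        simpa using key
    · have hT1 : {u | ∃ t ∈ Tset, u = ∑ k : Fin 1, (fun _ : Fin 1 => nrm / (2 * τ)) k * t k}
          = {u | ∃ t ∈ Tset, u = nrm / (2 * τ) * t 0} := by
        simp only [Fin.sum_univ_one]
      have hS1 : {u | ∃ s ∈ Sset, u = ∑ ℓ : Fin 1, (fun _ : Fin 1 => nrm / (2 * σ)) ℓ * s ℓ}
          = {u | ∃ s ∈ Sset, u = nrm / (2 * σ) * s 0} := by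
        simp only [Fin.sum_univ_one]
      rw [hT1, hS1, stmt17aux_sSup_one _ hnτ _ hTcomp hTne,
        stmt17aux_sSup_one _ hnσ _ hScomp hSne, ← hτdef, ← hσdef]
      have hτ0 : τ ≠ 0 := hτpos.ne'
      have hσ0 : σ ≠ 0 := hσpos.ne'
      field_simp
      ring
  have part2 : Opt ≤ nrm := by
    rw [hOpt]
    exact csInf_le ⟨nrm, hnrmle⟩ hmem
  exact le_antisymm part2 part1
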